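/- arXiv:2001.09635 — 3 statements merged into one kernel-verified Lean document; each statement's English description precedes it below -/
import Mathlib

section
/- Let p be a prime number and let A be any associative (possibly noncommutative) ring. For all a, b ∈ A, the element (a + b)^p − a^p − b^p lies in the additive subgroup pA + [A,A] of A generated by all elements pc with c ∈ A together with all commutators xy − yx with x, y ∈ A. -/
/-- The additive subgroup `p·A + [A,A]` of a ring `A` generated by all `p • c` together
with all commutators `x*y - y*x`. -/
def pCommutatorAddSubgroup (p : ℕ) (A : Type*) [Ring A] : AddSubgroup A :=
  AddSubgroup.closure ({x : A | ∃ c : A, x = p • c} ∪ {z : A | ∃ x y : A, z = x * y - y * x})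

namespace PCommAux

variable {p : ℕ} {A : Type*} [Ring A]

/-- The quotient map. -/
def π (p : ℕ) (A : Type*) [Ring A] : A →+ A ⧸ pCommutatorAddSubgroup p A :=
  QuotientAddGroup.mk' _

lemma π_nsmul (c : A) : π p A (p • c) = 0 :=
  (QuotientAddGroup.eq_zero_iff _).2 <| AddSubgroup.subset_closure (Or.inl ⟨c, rfl⟩)

lemma π_mul_comm (x y : A) : π p A (x * y) = π p A (y * x) := by
  rw [← sub_eq_zero, ← map_sub]
  exact (QuotientAddGroup.eq_zero_iff _).2 <| AddSubgroup.subset_closure (Or.inr ⟨x, y, rfl⟩)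

lemma π_rotate_one (l : List A) : π p A ((l.rotate 1).prod) = π p A l.prod := by
  cases l with
  | nil => simp
  | cons x t =>
    have : (x :: t).rotate 1 = t ++ [x] := by
      simpa using List.rotate_cons_succ t x 0
    rw [this, List.prod_append, List.prod_singleton, List.prod_cons, π_mul_comm]

lemma π_rotate (l : List A) (n : ℕ) : π p A ((l.rotate n).prod) = π p A l.prod := by
  induction n with
  | zero => simp
  | succ n ih => rw [← List.rotate_rotate, π_rotate_one, ih]

/-- Noncommutative binomial expansion as a sum over Boolean words. -/
lemma expand (a b : A) (n : ℕ) :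
    (a + b) ^ n = ∑ f : Fin n → Bool, (List.ofFn fun i => if f i then a else b).prod := by
  induction n with
  | zero => simp
  | succ n ih =>
    rw [pow_succ', ih, Finset.mul_sum,
      ← (Fin.consEquiv fun _ : Fin (n + 1) => Bool).sum_comp
        (fun f => (List.ofFn fun i => if f i then a else b).prod)]
    rw [Fintype.sum_prod_type]
    simp only [Fin.consEquiv_apply, List.ofFn_succ, Fin.cons_zero, Fin.cons_succ,
      List.prod_cons, Fintype.sum_bool, if_true, if_false]
    rw [← Finset.sum_add_distrib]
    exact Finset.sum_congr rfl fun f _ => (add_mul a b _)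

end PCommAux

namespace PCommAux

instance shiftSMul (p : ℕ) : SMul (Multiplicative (ZMod p)) (ZMod p → Bool) :=
  ⟨fun g f i => f (i + g.toAdd)⟩

lemma shift_smul_def {p : ℕ} (g : Multiplicative (ZMod p)) (f : ZMod p → Bool) (i : ZMod p) :
    (g • f) i = f (i + g.toAdd) := rfl

instance shiftAction (p : ℕ) : MulAction (Multiplicative (ZMod p)) (ZMod p → Bool) where
  one_smul f := funext fun i => by simp [shift_smul_def]
  mul_smul g h f := funext fun i => by simp [shift_smul_def, add_assoc]

variable {A : Type*} [Ring A]

/-- The word associated to a Boolean function on `ZMod p`. -/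
def P (p : ℕ) (a b : A) (f : ZMod p → Bool) : A :=
  (List.ofFn fun i : Fin p => if f (i : ℕ) then a else b).prod

lemma π_P_smul {p : ℕ} [NeZero p] (a b : A) (g : Multiplicative (ZMod p))
    (f : ZMod p → Bool) : π p A (P p a b (g • f)) = π p A (P p a b f) := by
  have hlist : (List.ofFn fun i : Fin p => if (g • f) (i : ℕ) then a else b) =
      (List.ofFn fun i : Fin p => if f (i : ℕ) then a else b).rotate g.toAdd.val := by
    apply List.ext_getElem
    · simp
    · intro k h1 h2
      have hk : k < p := by simpa using h1
      rw [List.getElem_rotate]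
      simp only [List.getElem_ofFn, List.length_ofFn]
      congr 1
      rw [shift_smul_def]
      congr 1
      rw [ZMod.natCast_mod, Nat.cast_add, ZMod.natCast_val, ZMod.cast_id]
  rw [P, hlist, π_rotate]; rfl

end PCommAux

namespace PCommAux

variable {A : Type*} [Ring A]

lemma P_const {p : ℕ} (a b : A) (c : Bool) :
    P p a b (fun _ => c) = (if c then a else b) ^ p := by
  unfold P
  have : (List.ofFn fun _ : Fin p => if c then a else b) =
      List.replicate p (if c then a else b) := List.ofFn_const _ _
  rw [this, List.prod_replicate]

lemma fixed_const {p : ℕ} [NeZero p] {f : ZMod p → Bool}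
    (hf : f ∈ MulAction.fixedPoints (Multiplicative (ZMod p)) (ZMod p → Bool)) :
    f = fun _ => f 0 := by
  funext z
  have := congrFun (hf (Multiplicative.ofAdd z)) 0
  rw [shift_smul_def] at this
  simpa using this

lemma const_fixed {p : ℕ} (c : Bool) :
    (fun _ : ZMod p => c) ∈ MulAction.fixedPoints (Multiplicative (ZMod p)) (ZMod p → Bool) :=
  fun g => funext fun i => rfl

end PCommAux

namespace PCommAux

variable {A : Type*} [Ring A]

lemma key {p : ℕ} [NeZero p] (hp : p.Prime) (a b : A) :
    ∑ f : ZMod p → Bool, π p A (P p a b f) = π p A (a ^ p) + π p A (b ^ p) := by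
  classical
  haveI : Fintype (MulAction.orbitRel.Quotient (Multiplicative (ZMod p)) (ZMod p → Bool)) :=
    Fintype.ofFinite _
  set Ω := MulAction.orbitRel.Quotient (Multiplicative (ZMod p)) (ZMod p → Bool) with hΩ
  set F : (ZMod p → Bool) → A ⧸ pCommutatorAddSubgroup p A :=
    fun f => π p A (P p a b f) with hF
  set ωt : Ω := Quotient.mk'' (fun _ => true) with hωt
  set ωf : Ω := Quotient.mk'' (fun _ => false) with hωf
  have hcardG : Fintype.card (Multiplicative (ZMod p)) = p := by simp [ZMod.card]
  have hne : ωt ≠ ωf := by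
    intro h
    rw [hωt, hωf, Quotient.eq''] at h
    obtain ⟨g, hg⟩ := h
    exact Bool.noConfusion (congrFun hg 0)
  have hconstω : ∀ y : ZMod p → Bool, (∀ z, y z = y 0) →
      (Quotient.mk'' y : Ω) = (if y 0 then ωt else ωf) := by
    intro y hy
    have hcy : Quotient.mk'' y = (Quotient.mk'' (fun _ => y 0) : Ω) := by
      rw [funext hy]
    cases h0 : y 0
    · rw [if_neg (by simp), hωf, hcy, h0]
    · rw [if_pos rfl, hωt, hcy, h0]
  have horb : ∀ ω : Ω,
      ∑ f ∈ Finset.univ.filter (fun f : ZMod p → Bool => (Quotient.mk'' f : Ω) = ω), F f =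
      (if ω = ωt then π p A (a ^ p) else 0) + (if ω = ωf then π p A (b ^ p) else 0) := by
    intro ω
    set y : ZMod p → Bool := ω.out with hy
    have hmem : ∀ f : ZMod p → Bool,
        (Quotient.mk'' f : Ω) = ω ↔ f ∈ MulAction.orbit (Multiplicative (ZMod p)) y := by
      intro f
      rw [← MulAction.orbitRel.Quotient.orbit_eq_orbit_out ω Quotient.out_eq',
        MulAction.orbitRel.Quotient.mem_orbit]
    have hsum : ∑ f ∈ Finset.univ.filter (fun f : ZMod p → Bool => (Quotient.mk'' f : Ω) = ω),
        F f =
        (Finset.univ.filter (fun f : ZMod p → Bool => (Quotient.mk'' f : Ω) = ω)).card • F y := by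
      rw [← Finset.sum_const]
      refine Finset.sum_congr rfl fun f hf => ?_
      obtain ⟨g, rfl⟩ := (hmem f).1 (Finset.mem_filter.1 hf).2
      exact π_P_smul a b g y
    have hcard : (Finset.univ.filter (fun f : ZMod p → Bool => (Quotient.mk'' f : Ω) = ω)).card =
        Fintype.card (MulAction.orbit (Multiplicative (ZMod p)) y) := by
      rw [← Fintype.card_subtype]
      exact Fintype.card_congr (Equiv.subtypeEquivRight hmem)
    have horbstab := MulAction.card_orbit_mul_card_stabilizer_eq_card_group
      (Multiplicative (ZMod p)) y
    rw [hcardG] at horbstab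
    have hdvd : Fintype.card (MulAction.orbit (Multiplicative (ZMod p)) y) ∣ p :=
      ⟨_, horbstab.symm⟩
    rcases hp.eq_one_or_self_of_dvd _ hdvd with h1 | hps
    · -- orbit has size 1 : y is a fixed point, hence constant
      have hyfix : y ∈ MulAction.fixedPoints (Multiplicative (ZMod p)) (ZMod p → Bool) :=
        MulAction.mem_fixedPoints_iff_card_orbit_eq_one.2 h1
      have hyconst := fixed_const hyfix
      have hωy : ω = (if y 0 then ωt else ωf) := by
        rw [← hconstω y (fun z => congrFun hyconst z)]
        exact (Quotient.out_eq' ω).symm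
      rw [hsum, hcard, h1, one_smul]
      cases h0 : y 0
      · rw [h0, if_neg (by simp)] at hωy
        rw [hωy, if_neg (fun h => hne h.symm), if_pos rfl, hF]
        show π p A (P p a b y) = _
        rw [show y = (fun _ => false) by rw [hyconst, h0], P_const]
        simp
      · rw [h0, if_pos rfl] at hωy
        rw [hωy, if_pos rfl, if_neg hne, add_zero, hF]
        show π p A (P p a b y) = _
        rw [show y = (fun _ => true) by rw [hyconst, h0], P_const]
        simp
    · -- orbit has size p : the whole orbit sum vanishes in the quotient
      have hnc : ∀ c : Bool, ω ≠ Quotient.mk'' (fun _ => c) := by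
        intro c h
        have hyc : y = fun _ => c := by
          have h2 : (Quotient.mk'' y : Ω) = Quotient.mk'' (fun _ => c) := by
            rw [Quotient.out_eq', h]
          rw [Quotient.eq''] at h2
          obtain ⟨g, hg⟩ := h2
          rw [← hg]
          rfl
        have hyfix : y ∈ MulAction.fixedPoints (Multiplicative (ZMod p)) (ZMod p → Bool) := by
          rw [hyc]; exact const_fixed c
        have := MulAction.mem_fixedPoints_iff_card_orbit_eq_one.1 hyfix
        rw [this] at hps
        exact hp.one_lt.ne' hps.symm
      rw [hsum, hcard, hps, if_neg (hωt ▸ hnc true), if_neg (hωf ▸ hnc false), add_zero, hF]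
      show p • π p A (P p a b y) = 0
      rw [← map_nsmul, π_nsmul]
  calc ∑ f : ZMod p → Bool, F f
      = ∑ ω : Ω, ∑ f ∈ Finset.univ.filter
          (fun f : ZMod p → Bool => (Quotient.mk'' f : Ω) = ω), F f := by
        rw [Finset.sum_fiberwise]
    _ = ∑ ω : Ω, ((if ω = ωt then π p A (a ^ p) else 0) +
          (if ω = ωf then π p A (b ^ p) else 0)) := Finset.sum_congr rfl fun ω _ => horb ω
    _ = π p A (a ^ p) + π p A (b ^ p) := by
        rw [Finset.sum_add_distrib, Finset.sum_ite_eq' Finset.univ ωt,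
          Finset.sum_ite_eq' Finset.univ ωf]
        simp

end PCommAux

namespace PCommAux

/-- The canonical equivalence `Fin p ≃ ZMod p`. -/
def e1 (p : ℕ) [NeZero p] : Fin p ≃ ZMod p where
  toFun i := ((i : ℕ) : ZMod p)
  invFun z := ⟨z.val, z.val_lt⟩
  left_inv i := by
    ext
    simp [ZMod.val_natCast_of_lt i.isLt]
  right_inv z := by
    simp [ZMod.natCast_val, ZMod.cast_id]

variable {A : Type*} [Ring A]

lemma expand' {p : ℕ} [NeZero p] (a b : A) :
    π p A ((a + b) ^ p) = ∑ f : ZMod p → Bool, π p A (P p a b f) := by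
  rw [expand a b p, map_sum]
  refine Fintype.sum_equiv ((e1 p).arrowCongr (Equiv.refl Bool))
    (fun h : Fin p → Bool => π p A ((List.ofFn fun i => if h i then a else b).prod))
    (fun f => π p A (P p a b f)) fun h => ?_
  congr 1
  refine congrArg List.prod (congrArg List.ofFn (funext fun i => congrArg (fun c : Bool => if c then a else b) ?_))
  show h i = h ((e1 p).symm (e1 p i))
  rw [Equiv.symm_apply_apply]

end PCommAux

theorem stmt_6 (p : ℕ) (hp : p.Prime) (A : Type*) [Ring A] (a b : A) :
    (a + b) ^ p - a ^ p - b ^ p ∈ pCommutatorAddSubgroup p A := by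
  haveI : NeZero p := ⟨hp.ne_zero⟩
  have h : PCommAux.π p A ((a + b) ^ p - a ^ p - b ^ p) = 0 := by
    rw [map_sub, map_sub, PCommAux.expand' a b, PCommAux.key hp a b]
    abel
  exact (QuotientAddGroup.eq_zero_iff _).1 h
end

section
/- Let p be a prime number and let A be any associative (possibly noncommutative) ring. If c ∈ A lies in [A,A], the additive subgroup of A generated by all commutators xy − yx with x, y ∈ A, then c^p lies in the additive subgroup pA + [A,A]. -/
/-- The additive subgroup `[A,A]` of a ring `A` generated by all commutators `x*y - y*x`. -/
def commutatorAddSubgroup (A : Type*) [Ring A] : AddSubgroup A :=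
  AddSubgroup.closure {z : A | ∃ x y : A, z = x * y - y * x}

namespace Stmt7

variable {A : Type*} [Ring A]

lemma comm_le (p : ℕ) : commutatorAddSubgroup A ≤ pCommutatorAddSubgroup p A :=
  AddSubgroup.closure_mono Set.subset_union_right

lemma comm_mem (u v : A) : u * v - v * u ∈ commutatorAddSubgroup A :=
  AddSubgroup.subset_closure ⟨u, v, rfl⟩

lemma smul_mem' (p : ℕ) (c : A) : p • c ∈ pCommutatorAddSubgroup p A :=
  AddSubgroup.subset_closure (Or.inl ⟨c, rfl⟩)

/-- `gg a b t` is `a` if `t = true` and `b` otherwise. -/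
def gg (a b : A) : Bool → A := fun t => bif t then a else b

/-- Ordered product of a word indexed by `Fin n`. -/
def PF (a b : A) (n : ℕ) (f : Fin n → Bool) : A := (List.ofFn fun i => gg a b (f i)).prod

lemma expandF (a b : A) (n : ℕ) : (a + b) ^ n = ∑ f : Fin n → Bool, PF a b n f := by
  induction n with
  | zero => simp [PF]
  | succ n ih =>
    have key : ∀ (t : Bool) (f : Fin n → Bool),
        PF a b (n+1) (Fin.cons t f) = gg a b t * PF a b n f := by
      intro t f
      simp [PF, List.ofFn_succ, Fin.cons_zero, Fin.cons_succ]
    calc (a + b) ^ (n+1) = (a + b) * (a + b) ^ n := by rw [pow_succ']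
    _ = ∑ f : Fin n → Bool, (gg a b true * PF a b n f + gg a b false * PF a b n f) := by
        rw [ih, Finset.mul_sum]
        refine Finset.sum_congr rfl fun f _ => ?_
        simp [gg, add_mul]
    _ = ∑ tf : Bool × (Fin n → Bool), PF a b (n+1) (Fin.cons tf.1 tf.2) := by
        rw [Fintype.sum_prod_type]
        simp [key, Fintype.sum_bool]
        rw [Finset.sum_add_distrib]
    _ = ∑ f : Fin (n+1) → Bool, PF a b (n+1) f :=
        Fintype.sum_equiv (Fin.consEquiv fun _ => Bool) _ _ (fun _ => rfl)

/-- Ordered product of a word indexed by `ZMod p`. -/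
def PP (a b : A) (p : ℕ) (f : ZMod p → Bool) : A :=
  (List.ofFn fun i : Fin p => gg a b (f ((i : ℕ) : ZMod p))).prod

def finZmodEquiv (p : ℕ) [NeZero p] : Fin p ≃ ZMod p where
  toFun i := ((i : ℕ) : ZMod p)
  invFun z := ⟨z.val, ZMod.val_lt z⟩
  left_inv i := by
    ext
    exact ZMod.val_cast_of_lt i.isLt
  right_inv z := ZMod.natCast_rightInverse z

lemma expandZ (a b : A) (p : ℕ) [NeZero p] :
    (a + b) ^ p = ∑ f : ZMod p → Bool, PP a b p f := by
  rw [expandF a b p]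
  exact (Fintype.sum_equiv ((Equiv.arrowCongr (finZmodEquiv p) (Equiv.refl Bool)).symm)
    (fun f : ZMod p → Bool => PP a b p f) (fun f : Fin p → Bool => PF a b p f)
    (fun _ => rfl)).symm

/-- The rotation of a word. -/
def rot (p : ℕ) (f : ZMod p → Bool) : ZMod p → Bool := fun i => f (i + 1)

lemma rot_iterate (p : ℕ) (k : ℕ) (f : ZMod p → Bool) :
    (rot p)^[k] f = fun i => f (i + (k : ZMod p)) := by
  induction k with
  | zero => simp
  | succ k ih =>
    rw [Function.iterate_succ_apply', ih]
    funext i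
    simp only [rot]
    congr 1
    push_cast
    ring

lemma PP_rot (a b : A) (p : ℕ) [NeZero p] (f : ZMod p → Bool) :
    PP a b p (rot p f) - PP a b p f ∈ commutatorAddSubgroup A := by
  obtain ⟨m, rfl⟩ := Nat.exists_eq_succ_of_ne_zero (NeZero.ne p)
  set Q : A := (List.ofFn fun i : Fin m => gg a b (f ((i.succ : ℕ) : ZMod (m+1)))).prod with hQ
  have h1 : PP a b (m+1) f = gg a b (f ((0:ℕ) : ZMod (m+1))) * Q := by
    rw [PP, List.ofFn_succ, List.prod_cons]
    rfl
  have h2 : PP a b (m+1) (rot (m+1) f) = Q * gg a b (f ((0:ℕ) : ZMod (m+1))) := by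
    rw [PP, List.ofFn_succ', List.prod_concat]
    congr 1
    · rw [hQ]
      have : (fun i : Fin m => gg a b (rot (m+1) f ((i.castSucc : ℕ) : ZMod (m+1)))) =
          (fun i : Fin m => gg a b (f ((i.succ : ℕ) : ZMod (m+1)))) := by
        funext i
        show gg a b (f (((i.castSucc : ℕ) : ZMod (m+1)) + 1)) = _
        congr 2
        push_cast [Fin.coe_castSucc, Fin.val_succ]
        ring
      rw [this]
    · show gg a b (f (((Fin.last m : ℕ) : ZMod (m+1)) + 1)) = gg a b (f ((0:ℕ) : ZMod (m+1)))
      congr 2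
      rw [Fin.val_last]
      push_cast
      simp [ZMod.natCast_self]
  rw [h1, h2]
  exact comm_mem _ _

lemma PP_rot_iter (a b : A) (p : ℕ) [NeZero p] (k : ℕ) (f : ZMod p → Bool) :
    PP a b p ((rot p)^[k] f) - PP a b p f ∈ commutatorAddSubgroup A := by
  induction k with
  | zero =>
    simp only [Function.iterate_zero, id_eq, sub_self]
    exact zero_mem _
  | succ k ih =>
    have h1 := PP_rot a b p ((rot p)^[k] f)
    have : PP a b p ((rot p)^[k+1] f) - PP a b p f =
        (PP a b p (rot p ((rot p)^[k] f)) - PP a b p ((rot p)^[k] f))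
          + (PP a b p ((rot p)^[k] f) - PP a b p f) := by
      rw [Function.iterate_succ_apply']
      abel
    rw [this]
    exact add_mem h1 ih

lemma PP_const (a b : A) (p : ℕ) (t : Bool) :
    PP a b p (fun _ => t) = (gg a b t) ^ p := by
  rw [PP, List.ofFn_const, List.prod_replicate]

/-- If `f` is invariant under a shift by a nonzero `d`, it is constant. -/
lemma const_of_shift (p : ℕ) [Fact p.Prime] (f : ZMod p → Bool) (d : ZMod p) (hd : d ≠ 0)
    (h : ∀ i, f (i + d) = f i) : ∀ i j, f i = f j := by
  have key : ∀ (n : ℕ) (i : ZMod p), f (i + n • d) = f i := by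
    intro n
    induction n with
    | zero => simp
    | succ n ih =>
      intro i
      have : i + (n + 1) • d = (i + d) + n • d := by
        rw [add_smul, one_smul]; ring
      rw [this, ih, h]
  intro i j
  have hj : j = i + (((j - i) * d⁻¹).val • d) := by
    have : ((((j - i) * d⁻¹).val : ℕ) : ZMod p) = (j - i) * d⁻¹ := ZMod.natCast_rightInverse _
    rw [nsmul_eq_mul, this, mul_assoc, inv_mul_cancel₀ hd, mul_one]
    ring
  rw [hj, key]

/-- Injectivity of the orbit map for a non-constant word. -/
lemma orbit_injective (p : ℕ) [Fact p.Prime] (f : ZMod p → Bool)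
    (hf : ¬ ∀ i j, f i = f j) :
    Function.Injective (fun k : Fin p => (rot p)^[(k : ℕ)] f) := by
  intro k l hkl
  by_contra hne
  simp only [rot_iterate] at hkl
  have hcast : ((k : ℕ) : ZMod p) ≠ ((l : ℕ) : ZMod p) := by
    intro h
    apply hne
    have := congrArg ZMod.val h
    rw [ZMod.val_cast_of_lt k.isLt, ZMod.val_cast_of_lt l.isLt] at this
    exact Fin.ext this
  set d : ZMod p := ((k : ℕ) : ZMod p) - ((l : ℕ) : ZMod p) with hd
  have hd0 : d ≠ 0 := sub_ne_zero.mpr hcast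
  apply hf
  refine const_of_shift p f d hd0 ?_
  intro i
  have := congrFun hkl (i - ((l : ℕ) : ZMod p))
  have e1 : i - ((l : ℕ) : ZMod p) + ((k : ℕ) : ZMod p) = i + d := by rw [hd]; ring
  have e2 : i - ((l : ℕ) : ZMod p) + ((l : ℕ) : ZMod p) = i := by ring
  rw [e1, e2] at this
  exact this

lemma sum_orbit_mem (a b : A) (p : ℕ) [Fact p.Prime] (f : ZMod p → Bool) :
    ∑ k : Fin p, PP a b p ((rot p)^[(k : ℕ)] f) ∈ pCommutatorAddSubgroup p A := by
  have : ∑ k : Fin p, PP a b p ((rot p)^[(k : ℕ)] f) =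
      (∑ k : Fin p, (PP a b p ((rot p)^[(k : ℕ)] f) - PP a b p f)) + p • PP a b p f := by
    rw [Finset.sum_sub_distrib, Finset.sum_const, Finset.card_univ, Fintype.card_fin]
    abel
  rw [this]
  exact add_mem
    (sum_mem fun k _ => comm_le p (PP_rot_iter a b p (k : ℕ) f))
    (smul_mem' p _)

lemma sum_nonconst_mem (a b : A) (p : ℕ) [Fact p.Prime] :
    ∀ (n : ℕ) (T : Finset (ZMod p → Bool)), T.card ≤ n →
      (∀ f ∈ T, ¬ ∀ i j, f i = f j) → (∀ f ∈ T, rot p f ∈ T) →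
      ∑ f ∈ T, PP a b p f ∈ pCommutatorAddSubgroup p A := by
  haveI : NeZero p := ⟨(Fact.out : p.Prime).ne_zero⟩
  intro n
  induction n with
  | zero =>
    intro T hT _ _
    rw [Nat.le_zero, Finset.card_eq_zero] at hT
    subst hT
    simp only [Finset.sum_empty]
    exact zero_mem _
  | succ n ih =>
    intro T hT hnc hrot
    rcases T.eq_empty_or_nonempty with rfl | ⟨f₀, hf₀⟩
    · simp only [Finset.sum_empty]
      exact zero_mem _
    · have hiter : ∀ (k : ℕ) f, f ∈ T → (rot p)^[k] f ∈ T := by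
        intro k
        induction k with
        | zero => intro f hf; exact hf
        | succ k ihk =>
          intro f hf
          rw [Function.iterate_succ_apply']
          exact hrot _ (ihk f hf)
      set O : Finset (ZMod p → Bool) :=
        Finset.image (fun k : Fin p => (rot p)^[(k : ℕ)] f₀) Finset.univ with hO
      have hinj := orbit_injective p f₀ (hnc f₀ hf₀)
      have hOsub : O ⊆ T := by
        intro f hf
        rw [hO, Finset.mem_image] at hf
        obtain ⟨k, _, rfl⟩ := hf
        exact hiter _ _ hf₀
      have hOiter : ∀ k : ℕ, (rot p)^[k] f₀ ∈ O := by
        intro k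
        have hkp : (rot p)^[k] f₀ = (rot p)^[k % p] f₀ := by
          rw [rot_iterate, rot_iterate]
          funext i
          congr 1
          rw [ZMod.natCast_mod]
        rw [hkp, hO, Finset.mem_image]
        exact ⟨⟨k % p, Nat.mod_lt _ (Fact.out : p.Prime).pos⟩, Finset.mem_univ _, rfl⟩
      have hOsum : ∑ f ∈ O, PP a b p f ∈ pCommutatorAddSubgroup p A := by
        rw [hO, Finset.sum_image (fun k _ l _ h => hinj h)]
        exact sum_orbit_mem a b p f₀
      -- the complement
      have hrot' : ∀ f ∈ T \ O, rot p f ∈ T \ O := by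
        intro f hf
        rw [Finset.mem_sdiff] at hf ⊢
        refine ⟨hrot _ hf.1, ?_⟩
        intro hmem
        apply hf.2
        rw [hO, Finset.mem_image] at hmem
        obtain ⟨k, _, hk⟩ := hmem
        have h5 : (rot p)^[p - 1 + 1] f = f := by
          rw [Nat.sub_add_cancel (Fact.out : p.Prime).pos, rot_iterate]
          funext i
          simp [ZMod.natCast_self]
        have h6 : (rot p)^[p - 1] (rot p f) = f := by
          rw [← Function.iterate_succ_apply]
          exact h5
        rw [← h6, ← hk, ← Function.iterate_add_apply]
        exact hOiter _
      have hcardO : 0 < O.card := Finset.card_pos.mpr ⟨f₀, hOiter 0⟩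
      have hcard : (T \ O).card ≤ n := by
        have := Finset.card_sdiff_of_subset hOsub
        omega
      have hrec := ih (T \ O) hcard (fun f hf => hnc f (Finset.mem_sdiff.mp hf).1) hrot'
      rw [← Finset.sum_sdiff (f := PP a b p) hOsub]
      exact add_mem hrec hOsum

lemma freshman (a b : A) (p : ℕ) [Fact p.Prime] :
    (a + b) ^ p - a ^ p - b ^ p ∈ pCommutatorAddSubgroup p A := by
  classical
  haveI : NeZero p := ⟨(Fact.out : p.Prime).ne_zero⟩
  have hexp := expandZ a b p
  set NC : (ZMod p → Bool) → Prop := fun f => ¬ ∀ i j, f i = f j with hNC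
  have hsplit := Finset.sum_filter_add_sum_filter_not Finset.univ NC (PP a b p)
  have hctcf : (fun _ : ZMod p => true) ≠ (fun _ : ZMod p => false) := by
    intro h
    have := congrFun h 0
    simp at this
  have hconstset : Finset.univ.filter (fun f : ZMod p → Bool => ¬ NC f) =
      {fun _ => true, fun _ => false} := by
    ext f
    simp only [Finset.mem_filter, Finset.mem_univ, true_and, Finset.mem_insert,
      Finset.mem_singleton, hNC, not_not]
    constructor
    · intro h
      cases ht : f 0 with
      | true => exact Or.inl (funext fun i => by rw [h i 0, ht])
      | false => exact Or.inr (funext fun i => by rw [h i 0, ht])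
    · rintro (rfl | rfl) <;> intro i j <;> rfl
  have hconstsum : ∑ f ∈ Finset.univ.filter (fun f : ZMod p → Bool => ¬ NC f), PP a b p f
      = a ^ p + b ^ p := by
    rw [hconstset, Finset.sum_pair hctcf, PP_const, PP_const]
    rfl
  have key : (a + b) ^ p - a ^ p - b ^ p
      = ∑ f ∈ Finset.univ.filter NC, PP a b p f := by
    rw [hexp, ← hsplit, hconstsum]
    abel
  rw [key]
  refine sum_nonconst_mem a b p (Finset.univ.filter NC).card _ le_rfl ?_ ?_
  · intro f hf
    rw [Finset.mem_filter] at hf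
    exact hf.2
  · intro f hf
    rw [Finset.mem_filter] at hf ⊢
    refine ⟨Finset.mem_univ _, ?_⟩
    intro hconst
    apply hf.2
    intro i j
    have hi : f i = rot p f (i - 1) := by
      simp [rot]
    have hj : f j = rot p f (j - 1) := by
      simp [rot]
    rw [hi, hj, hconst (i-1) (j-1)]

lemma mul_pow_succ' (x y : A) (m : ℕ) : (x * y) ^ (m + 1) = x * ((y * x) ^ m * y) := by
  induction m with
  | zero => simp
  | succ m ih =>
    rw [pow_succ, ih, pow_succ]
    simp [mul_assoc]

end Stmt7

theorem stmt_7 (p : ℕ) (hp : p.Prime) (A : Type*) [Ring A] (c : A)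
    (hc : c ∈ commutatorAddSubgroup A) :
    c ^ p ∈ pCommutatorAddSubgroup p A := by
  haveI : Fact p.Prime := ⟨hp⟩
  obtain ⟨m, hm⟩ := Nat.exists_eq_succ_of_ne_zero hp.ne_zero
  induction hc using AddSubgroup.closure_induction with
  | mem z hz =>
    obtain ⟨x, y, rfl⟩ := hz
    set u : A := y * x with hu
    have hz' : x * y - y * x = x * y + -u := by rw [hu]; abel
    have h1 : (x * y + -u) ^ p - (x * y) ^ p - (-u) ^ p ∈ pCommutatorAddSubgroup p A :=
      Stmt7.freshman (x * y) (-u) p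
    have h2 : (x * y) ^ p - u ^ p ∈ commutatorAddSubgroup A := by
      have ha : (x * y) ^ p = x * ((y * x) ^ m * y) := by
        rw [hm]; exact Stmt7.mul_pow_succ' x y m
      have hb : u ^ p = ((y * x) ^ m * y) * x := by
        rw [hu, hm, pow_succ, mul_assoc]
      rw [ha, hb]
      exact Stmt7.comm_mem _ _
    rcases hp.eq_two_or_odd' with h2p | hodd
    · subst h2p
      have hsm : u ^ 2 + u ^ 2 ∈ pCommutatorAddSubgroup 2 A := by
        have := Stmt7.smul_mem' 2 (u ^ 2) (A := A)
        rwa [two_nsmul] at this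
      have : (x * y - y * x) ^ 2 =
          ((x * y + -u) ^ 2 - (x * y) ^ 2 - (-u) ^ 2) + ((x * y) ^ 2 - u ^ 2)
            + (u ^ 2 + u ^ 2) := by
        rw [hz', neg_sq]
        abel
      rw [this]
      exact add_mem (add_mem h1 (Stmt7.comm_le 2 h2)) hsm
    · have : (x * y - y * x) ^ p =
          ((x * y + -u) ^ p - (x * y) ^ p - (-u) ^ p) + ((x * y) ^ p - u ^ p) := by
        rw [hz', hodd.neg_pow]
        abel
      rw [this]
      exact add_mem h1 (Stmt7.comm_le p h2)
  | zero =>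
    rw [zero_pow hp.ne_zero]
    exact zero_mem _
  | add x y hx hy ihx ihy =>
    have h1 := Stmt7.freshman x y p
    have : (x + y) ^ p = ((x + y) ^ p - x ^ p - y ^ p) + x ^ p + y ^ p := by abel
    rw [this]
    exact add_mem (add_mem h1 ihx) ihy
  | neg x hx ihx =>
    rcases Nat.even_or_odd p with he | ho
    · rw [he.neg_pow]
      exact ihx
    · rw [ho.neg_pow]
      exact neg_mem ihx
end

section
/- Let p be a prime number and let A be any associative (possibly noncommutative) ring. If a, b ∈ A satisfy a − b ∈ pA + [A,A], then a^p − b^p ∈ pA + [A,A]. In other words, the p-th power map is well defined on the quotient abelian group A/(pA + [A,A]). -/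
namespace Stmt8Aux

variable {A : Type*} [Ring A]

open Fin.NatCast

lemma mem_smul (p : ℕ) (c : A) : p • c ∈ pCommutatorAddSubgroup p A :=
  AddSubgroup.subset_closure (Or.inl ⟨c, rfl⟩)

lemma mem_comm (p : ℕ) (u v : A) : u * v - v * u ∈ pCommutatorAddSubgroup p A :=
  AddSubgroup.subset_closure (Or.inr ⟨u, v, rfl⟩)

/-- Cyclic rotation of a word. -/
def rotW {n : ℕ} [NeZero n] {β : Type*} (f : Fin n → β) : Fin n → β := fun i => f (i + 1)

lemma ofFn_rotW {n : ℕ} [NeZero n] {β : Type*} (f : Fin n → β) :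
    List.ofFn (rotW f) = (List.ofFn f).rotate 1 := by
  apply List.ext_getElem
  · simp
  intro i h1 h2
  rw [List.getElem_ofFn, List.getElem_rotate]
  simp only [List.getElem_ofFn]
  show f (⟨i, _⟩ + 1) = _
  congr 1
  apply Fin.ext
  simp only [List.length_ofFn] at h1
  simp only [Fin.add_def, Fin.val_one', List.length_ofFn]
  conv_rhs => rw [Nat.add_mod]
  rw [Nat.mod_eq_of_lt h1]

lemma rotW_iterate {n : ℕ} [NeZero n] {β : Type*} (f : Fin n → β) (k : ℕ) (i : Fin n) :
    (rotW^[k] f) i = f (i + (k : Fin n)) := by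
  induction k generalizing f with
  | zero => simp
  | succ k ih =>
    rw [Function.iterate_succ_apply, ih]
    show f (i + (k : Fin n) + 1) = _
    congr 1
    push_cast
    rw [add_assoc]

lemma rotW_iterate_n {n : ℕ} [NeZero n] {β : Type*} (f : Fin n → β) :
    rotW^[n] f = f := by
  funext i
  rw [rotW_iterate]
  simp

lemma rotW_iterate_mod {n : ℕ} [NeZero n] {β : Type*} (f : Fin n → β) (m : ℕ) :
    rotW^[m] f = rotW^[m % n] f := by
  conv_lhs => rw [← Nat.div_add_mod m n, Function.iterate_add_apply, Function.iterate_mul]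
  exact Function.iterate_fixed (rotW_iterate_n _) _

lemma const_of_rotW_fixed {n : ℕ} [NeZero n] {β : Type*} {f : Fin n → β}
    (h : rotW f = f) : ∀ i, f i = f 0 := by
  have key : ∀ k : ℕ, f (k : Fin n) = f 0 := by
    intro k
    induction k with
    | zero => simp
    | succ k ih =>
      have : f ((k : Fin n) + 1) = f (k : Fin n) := congrFun h (k : Fin n)
      rw [← ih, ← this]
      congr 1
      push_cast
      ring
  intro i
  have := key i.val
  rwa [Fin.cast_val_eq_self] at this

lemma rotW_fixed_of_iterate {p : ℕ} (hp : p.Prime) [NeZero p] {β : Type*} {f : Fin p → β}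
    {d : ℕ} (hd0 : 0 < d) (hdp : d < p) (hfd : rotW^[d] f = f) :
    rotW f = f := by
  have hnd : ¬ p ∣ d := fun hdvd => absurd (Nat.le_of_dvd hd0 hdvd) (by omega)
  have hcop : Nat.Coprime d p := (hp.coprime_iff_not_dvd.mpr hnd).symm
  obtain ⟨m, -, hm⟩ := Nat.exists_mul_mod_eq_one_of_coprime hcop hp.one_lt
  have h1 : rotW^[d * m] f = f := by
    rw [Function.iterate_mul]
    exact Function.iterate_fixed hfd m
  have h2 : rotW^[d * m] f = rotW^[1] f := by
    rw [rotW_iterate_mod, hm]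
  have h3 : rotW f = rotW^[1] f := by rw [Function.iterate_one]
  rw [h3, ← h2, h1]

/-- Sum of a rotation-invariant `p`-torsion-valued function over a rotation-closed
set of non-fixed words vanishes. -/
lemma sum_orbit_zero {p : ℕ} (hp : p.Prime) {M : Type*} [AddCommMonoid M]
    [NeZero p] (F : (Fin p → Bool) → M)
    (hrot : ∀ f, F (rotW f) = F f) (htor : ∀ f, p • F f = 0) :
    ∀ N : ℕ, ∀ T : Finset (Fin p → Bool), T.card ≤ N →
      (∀ f ∈ T, rotW f ∈ T) → (∀ f ∈ T, rotW f ≠ f) → ∑ f ∈ T, F f = 0 := by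
  intro N
  induction N with
  | zero =>
    intro T hc _ _
    have : T = ∅ := Finset.card_eq_zero.mp (Nat.le_zero.mp hc)
    simp [this]
  | succ N ih =>
    intro T hc hcl hfix
    rcases T.eq_empty_or_nonempty with rfl | ⟨f₀, hf₀⟩
    · simp
    -- the orbit of f₀
    set O : Finset (Fin p → Bool) := (Finset.range p).image (fun k => rotW^[k] f₀) with hO
    have hmemT : ∀ k : ℕ, rotW^[k] f₀ ∈ T := by
      intro k
      induction k with
      | zero => simpa using hf₀
      | succ k ih2 => rw [Function.iterate_succ_apply']; exact hcl _ ih2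
    have hOT : O ⊆ T := by
      intro g hg
      rw [hO, Finset.mem_image] at hg
      obtain ⟨k, _, rfl⟩ := hg
      exact hmemT k
    have hfix₀ : rotW f₀ ≠ f₀ := hfix f₀ hf₀
    -- injectivity on range p
    have hinj : ∀ k ∈ Finset.range p, ∀ l ∈ Finset.range p,
        rotW^[k] f₀ = rotW^[l] f₀ → k = l := by
      have key : ∀ k l : ℕ, k < p → l < p → k < l → rotW^[k] f₀ = rotW^[l] f₀ → False := by
        intro k l hk hl hkl heq
        have h1 : rotW^[p - l + k] f₀ = rotW^[p - l + l] f₀ := by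
          rw [Function.iterate_add_apply, Function.iterate_add_apply, heq]
        have h2 : rotW^[p - l + l] f₀ = f₀ := by
          rw [show p - l + l = p from by omega, rotW_iterate_n]
        exact hfix₀ (rotW_fixed_of_iterate hp (show 0 < p - l + k from by omega)
          (show p - l + k < p from by omega) (h1.trans h2))
      intro k hk l hl heq
      rw [Finset.mem_range] at hk hl
      rcases Nat.lt_trichotomy k l with h | h | h
      · exact absurd heq (fun he => key k l hk hl h he)
      · exact h
      · exact absurd heq.symm (fun he => key l k hl hk h he)
    have hFconst : ∀ k : ℕ, F (rotW^[k] f₀) = F f₀ := by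
      intro k
      induction k with
      | zero => simp
      | succ k ih2 => rw [Function.iterate_succ_apply', hrot]; exact ih2
    have hsumO : ∑ g ∈ O, F g = 0 := by
      rw [hO, Finset.sum_image hinj]
      calc ∑ k ∈ Finset.range p, F (rotW^[k] f₀)
          = ∑ _k ∈ Finset.range p, F f₀ := Finset.sum_congr rfl (fun k _ => hFconst k)
        _ = p • F f₀ := by rw [Finset.sum_const, Finset.card_range]
        _ = 0 := htor f₀
    -- O is closed under arbitrary iterates of rotW
    have hOcl : ∀ j : ℕ, ∀ g ∈ O, rotW^[j] g ∈ O := by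
      intro j g hg
      rw [hO, Finset.mem_image] at hg ⊢
      obtain ⟨k, _, rfl⟩ := hg
      refine ⟨(j + k) % p, Finset.mem_range.mpr (Nat.mod_lt _ hp.pos), ?_⟩
      rw [← rotW_iterate_mod, Function.iterate_add_apply]
    have hstep : ∀ g, g ∉ O → rotW g ∉ O := by
      intro g hg hrg
      apply hg
      have : rotW^[p - 1] (rotW g) ∈ O := hOcl (p - 1) _ hrg
      rw [← Function.iterate_succ_apply] at this
      have h2 : (p - 1).succ = p := by have := hp.pos; omega
      rw [h2, rotW_iterate_n] at this
      exact this
    have hf₀O : f₀ ∈ O := by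
      rw [hO, Finset.mem_image]
      exact ⟨0, Finset.mem_range.mpr hp.pos, rfl⟩
    have hcard : (T \ O).card ≤ N := by
      have h1 : (T \ O).card = T.card - O.card := Finset.card_sdiff_of_subset hOT
      have h2 : 0 < O.card := Finset.card_pos.mpr ⟨f₀, hf₀O⟩
      omega
    have hsumrest : ∑ g ∈ T \ O, F g = 0 := by
      refine ih (T \ O) hcard ?_ ?_
      · intro g hg
        rw [Finset.mem_sdiff] at hg ⊢
        exact ⟨hcl g hg.1, hstep g hg.2⟩
      · intro g hg
        exact hfix g (Finset.mem_sdiff.mp hg).1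
    calc ∑ f ∈ T, F f = ∑ g ∈ T \ O, F g + ∑ g ∈ O, F g := (Finset.sum_sdiff hOT).symm
      _ = 0 := by rw [hsumO, hsumrest, add_zero]

lemma prod_rotate_sub_mem (p : ℕ) (l : List A) :
    l.prod - (l.rotate 1).prod ∈ pCommutatorAddSubgroup p A := by
  cases l with
  | nil => simpa using zero_mem (pCommutatorAddSubgroup p A)
  | cons a t =>
    rw [List.rotate_cons_succ, List.rotate_zero, List.prod_cons, List.prod_append,
      List.prod_singleton]
    exact mem_comm p a t.prod

/-- Noncommutative expansion of `(x + y)^n` as a sum over words. -/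
lemma expand (x y : A) : ∀ n : ℕ,
    (x + y) ^ n = ∑ f : Fin n → Bool, (List.ofFn fun i => cond (f i) x y).prod := by
  intro n
  induction n with
  | zero => simp
  | succ n ih =>
    have key : ∑ g : Fin (n+1) → Bool, (List.ofFn fun i => cond (g i) x y).prod
        = x * (∑ f : Fin n → Bool, (List.ofFn fun i => cond (f i) x y).prod)
          + y * (∑ f : Fin n → Bool, (List.ofFn fun i => cond (f i) x y).prod) := by
      rw [← Equiv.sum_comp (Fin.consEquiv fun _ : Fin (n+1) => Bool)
        (fun g : Fin (n+1) → Bool => (List.ofFn fun i => cond (g i) x y).prod)]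
      rw [Fintype.sum_prod_type, Fintype.sum_bool]
      rw [Finset.mul_sum, Finset.mul_sum]
      congr 1 <;> refine Finset.sum_congr rfl fun f _ => ?_ <;>
        simp [Fin.consEquiv, List.ofFn_succ]
    rw [pow_succ', ih, add_mul, ← key]

/-- Frobenius is additive mod `pA + [A,A]`. -/
lemma frob (p : ℕ) (hp : p.Prime) (x y : A) :
    (x + y) ^ p - x ^ p - y ^ p ∈ pCommutatorAddSubgroup p A := by
  haveI : NeZero p := ⟨hp.ne_zero⟩
  set S := pCommutatorAddSubgroup p A with hSdef
  let mk : A →+ A ⧸ S := QuotientAddGroup.mk' S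
  have hmk0 : ∀ w : A, mk w = 0 ↔ w ∈ S := fun w => QuotientAddGroup.eq_zero_iff w
  set P : (Fin p → Bool) → A := fun f => (List.ofFn fun i => cond (f i) x y).prod with hP
  set F : (Fin p → Bool) → A ⧸ S := fun f => mk (P f) with hF
  have hrot : ∀ f, F (rotW f) = F f := by
    intro f
    have hmem : P f - P (rotW f) ∈ S := by
      have h1 := prod_rotate_sub_mem p (List.ofFn fun i => cond (f i) x y)
      rw [← ofFn_rotW] at h1
      exact h1
    exact ((QuotientAddGroup.eq_iff_sub_mem).mpr hmem).symm
  have htor : ∀ f, p • F f = 0 := by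
    intro f
    rw [hF, ← map_nsmul]
    exact (hmk0 _).mpr (mem_smul p (P f))
  have hconst : ∀ (b : Bool) (f : Fin p → Bool), rotW f = (fun _ => b) → f = fun _ => b := by
    intro b f hf
    funext j
    have h1 : rotW f (j - 1) = b := by rw [hf]
    have h2 : rotW f (j - 1) = f j := by
      show f (j - 1 + 1) = f j
      rw [sub_add_cancel]
    rw [← h2, h1]
  set ct : Fin p → Bool := fun _ => true with hct
  set cf : Fin p → Bool := fun _ => false with hcf
  have hne : ct ≠ cf := by
    intro hh
    have := congrFun hh ⟨0, hp.pos⟩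
    simp [hct, hcf] at this
  set C : Finset (Fin p → Bool) := {ct, cf} with hC
  have hrest : ∑ f ∈ Finset.univ \ C, F f = 0 := by
    refine sum_orbit_zero hp F hrot htor (Finset.univ \ C).card (Finset.univ \ C) le_rfl ?_ ?_
    · intro f hf
      rw [Finset.mem_sdiff] at hf ⊢
      refine ⟨Finset.mem_univ _, fun hmem => hf.2 ?_⟩
      rw [hC, Finset.mem_insert, Finset.mem_singleton] at hmem ⊢
      rcases hmem with h1 | h1
      · exact Or.inl (hconst true f h1)
      · exact Or.inr (hconst false f h1)
    · intro f hf hfix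
      rw [Finset.mem_sdiff] at hf
      apply hf.2
      have hcst : f = fun _ => f 0 := funext (const_of_rotW_fixed hfix)
      rw [hC, Finset.mem_insert, Finset.mem_singleton]
      cases hb : f 0
      · right; rw [hcst, hb]
      · left; rw [hcst, hb]
  have hsum : mk ((x + y) ^ p) = F ct + F cf := by
    rw [expand x y p, map_sum]
    have hsplit := Finset.sum_sdiff (f := F) (Finset.subset_univ C)
    calc ∑ f : Fin p → Bool, mk (P f)
        = ∑ f ∈ Finset.univ \ C, F f + ∑ f ∈ C, F f := hsplit.symm
      _ = ∑ f ∈ C, F f := by rw [hrest, zero_add]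
      _ = F ct + F cf := Finset.sum_pair hne
  have hPt : P ct = x ^ p := by
    show (List.ofFn fun _ : Fin p => x).prod = x ^ p
    rw [List.ofFn_const, List.prod_replicate]
  have hPf : P cf = y ^ p := by
    show (List.ofFn fun _ : Fin p => y).prod = y ^ p
    rw [List.ofFn_const, List.prod_replicate]
  have hfinal : mk ((x + y) ^ p - x ^ p - y ^ p) = 0 := by
    rw [map_sub, map_sub, hsum, ← hPt, ← hPf]
    show F ct + F cf - F ct - F cf = 0
    abel
  exact (hmk0 _).mp hfinal

lemma mul_pow_succ_aux (u v : A) : ∀ n : ℕ, (u * v) ^ (n + 1) = u * ((v * u) ^ n * v)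
  | 0 => by simp
  | n + 1 => by
    rw [pow_succ, mul_pow_succ_aux u v n, pow_succ]
    simp only [mul_assoc]

lemma neg_pow_add_mem (p : ℕ) (hp : p.Prime) (z : A) :
    (-z) ^ p + z ^ p ∈ pCommutatorAddSubgroup p A := by
  rcases hp.eq_two_or_odd' with h2 | hodd
  · subst h2
    rw [neg_sq, ← two_nsmul]
    exact mem_smul 2 _
  · rw [hodd.neg_pow, neg_add_cancel]
    exact zero_mem _

lemma pow_mem (p : ℕ) (hp : p.Prime) {s : A} (hs : s ∈ pCommutatorAddSubgroup p A) :
    s ^ p ∈ pCommutatorAddSubgroup p A := by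
  have hs' : s ∈ AddSubgroup.closure
      ({x : A | ∃ c : A, x = p • c} ∪ {z : A | ∃ x y : A, z = x * y - y * x}) := hs
  clear hs
  induction hs' using AddSubgroup.closure_induction with
  | mem z hz =>
    simp only [Set.mem_union, Set.mem_setOf_eq] at hz
    rcases hz with ⟨c, rfl⟩ | ⟨u, v, rfl⟩
    · rw [nsmul_eq_mul, (Nat.cast_commute (p : ℕ) c).mul_pow]
      have h1 : ((p : ℕ) : A) ^ p = ((p : ℕ) : A) * ((p : ℕ) : A) ^ (p - 1) := by
        nth_rewrite 2 [show p = 1 + (p - 1) from by have := hp.pos; omega]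
        rw [pow_add, pow_one]
      rw [h1, mul_assoc, ← nsmul_eq_mul]
      exact mem_smul p _
    · have key : (u * v) ^ p - (v * u) ^ p ∈ pCommutatorAddSubgroup p A := by
        have e1 : (u * v) ^ p = u * ((v * u) ^ (p - 1) * v) := by
          conv_lhs => rw [show p = (p - 1) + 1 from by have := hp.pos; omega]
          exact mul_pow_succ_aux u v (p - 1)
        have e2 : (v * u) ^ p = ((v * u) ^ (p - 1) * v) * u := by
          conv_lhs => rw [show p = (p - 1) + 1 from by have := hp.pos; omega]
          rw [pow_succ, mul_assoc]
        rw [e1, e2]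
        exact mem_comm p u _
      have hfrob := frob p hp (u * v) (-(v * u))
      have hneg := neg_pow_add_mem p hp (v * u)
      have hrw : u * v - v * u = u * v + -(v * u) := by rw [sub_eq_add_neg]
      rw [hrw]
      have final : (u * v + -(v * u)) ^ p =
          ((u * v + -(v * u)) ^ p - (u * v) ^ p - (-(v * u)) ^ p)
          + ((-(v * u)) ^ p + (v * u) ^ p) + ((u * v) ^ p - (v * u) ^ p) := by abel
      rw [final]
      exact add_mem (add_mem hfrob hneg) key
  | zero =>
    rw [zero_pow hp.ne_zero]
    exact zero_mem _
  | add a b ha hb iha ihb =>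
    have hfrob := frob p hp a b
    have final : (a + b) ^ p = ((a + b) ^ p - a ^ p - b ^ p) + a ^ p + b ^ p := by abel
    rw [final]
    exact add_mem (add_mem hfrob iha) ihb
  | neg a ha iha =>
    have hneg := neg_pow_add_mem p hp a
    have final : (-a) ^ p = ((-a) ^ p + a ^ p) - a ^ p := by abel
    rw [final]
    exact sub_mem hneg iha

end Stmt8Aux

theorem stmt_8 (p : ℕ) (hp : p.Prime) (A : Type*) [Ring A] (a b : A)
    (h : a - b ∈ pCommutatorAddSubgroup p A) :
    a ^ p - b ^ p ∈ pCommutatorAddSubgroup p A := by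
  have hs := Stmt8Aux.pow_mem p hp h
  have hfrob := Stmt8Aux.frob p hp b (a - b)
  rw [show b + (a - b) = a from by abel] at hfrob
  have final : a ^ p - b ^ p = (a ^ p - b ^ p - (a - b) ^ p) + (a - b) ^ p := by abel
  rw [final]
  exact add_mem hfrob hs
end
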